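/- The function s ↦ q(s)/s is decreasing on (0,1), and there exists a universal constant C > 0 such that q(s) ≤ C·s·√(|log s|) for all 0 < s < 1. -/

import Mathlib

open MeasureTheory ProbabilityTheory Real Set Filter

noncomputable def gamma1 : Measure ℝ := gaussianReal 0 1

noncomputable def Phi (t : ℝ) : ℝ :=
  ∫ s in Set.Iic t, (Real.sqrt (2 * Real.pi))⁻¹ * Real.exp (-s ^ 2 / 2)

noncomputable def Psi : ℝ → ℝ := Function.invFun Phi
noncomputable def q2 (s : ℝ) : ℝ := (Real.sqrt (2 * Real.pi))⁻¹ * Real.exp (-(Psi s) ^ 2 / 2)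

noncomputable def gpdf (x : ℝ) : ℝ := (Real.sqrt (2 * Real.pi))⁻¹ * Real.exp (-x ^ 2 / 2)

lemma gpdf_def (x : ℝ) : gpdf x = (Real.sqrt (2 * Real.pi))⁻¹ * Real.exp (-x ^ 2 / 2) := rfl

lemma sqrt_two_pi_bounds : 2 ≤ Real.sqrt (2 * Real.pi) ∧ Real.sqrt (2 * Real.pi) ≤ 3 := by
  constructor
  · exact (Real.le_sqrt (by norm_num) (by positivity)).2 (by nlinarith [Real.pi_gt_three])
  · rw [show (3:ℝ) = Real.sqrt 9 by
      rw [show (9:ℝ) = 3^2 by norm_num, Real.sqrt_sq (by norm_num : (0:ℝ) ≤ 3)]]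
    exact Real.sqrt_le_sqrt (by nlinarith [Real.pi_le_four])

lemma gpdf_pos (x : ℝ) : 0 < gpdf x := by
  have h := sqrt_two_pi_bounds.1
  exact mul_pos (inv_pos.2 (by linarith)) (Real.exp_pos _)

lemma gpdf_le_half (x : ℝ) : gpdf x ≤ 1/2 := by
  have h := sqrt_two_pi_bounds.1
  have h2 : (Real.sqrt (2 * Real.pi))⁻¹ ≤ 1/2 := by
    rw [inv_le_comm₀ (by linarith) (by norm_num)]; linarith
  have h3 : Real.exp (-x ^ 2 / 2) ≤ 1 := by
    rw [← Real.exp_zero]; exact Real.exp_le_exp.2 (by nlinarith [sq_nonneg x])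
  calc gpdf x ≤ (1/2) * 1 :=
        mul_le_mul h2 h3 (Real.exp_pos _).le (by norm_num)
    _ = 1/2 := by norm_num

lemma continuous_gpdf : Continuous gpdf := by
  unfold gpdf; fun_prop

lemma integrable_gpdf : Integrable gpdf := by
  have := (integrable_exp_neg_mul_sq (b := 1/2) (by norm_num)).const_mul
    (Real.sqrt (2 * Real.pi))⁻¹
  refine this.congr ?_
  filter_upwards with x
  rw [gpdf_def]; ring_nf

lemma integrable_id_gpdf : Integrable (fun x => x * gpdf x) := by
  have := ((integrable_mul_exp_neg_mul_sq (b := 1/2) (by norm_num)).const_mul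
    (Real.sqrt (2 * Real.pi))⁻¹)
  refine this.congr ?_
  filter_upwards with x
  rw [gpdf_def]; ring_nf

lemma hasDerivAt_gpdf (x : ℝ) : HasDerivAt gpdf (-x * gpdf x) x := by
  have h1 : HasDerivAt (fun y : ℝ => -y ^ 2 / 2) (-x) x := by
    have := ((hasDerivAt_pow 2 x).neg).div_const 2
    exact this.congr_deriv (by push_cast; ring)
  have h2 := (h1.exp).const_mul (Real.sqrt (2 * Real.pi))⁻¹
  exact h2.congr_deriv (by rw [gpdf_def]; ring)

lemma tendsto_gpdf_atBot : Tendsto gpdf atBot (nhds 0) := by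
  have hsq : Tendsto (fun x : ℝ => x ^ 2) atBot atTop := by
    have h := (tendsto_pow_atTop (two_ne_zero)).comp (tendsto_neg_atBot_atTop : Tendsto (fun x:ℝ => -x) atBot atTop)
    refine h.congr fun x => ?_
    simp [Function.comp, neg_sq]
  have h1 : Tendsto (fun x : ℝ => -x ^ 2 / 2) atBot atBot := by
    have := (tendsto_neg_atTop_atBot.comp hsq).atBot_div_const (by norm_num : (0:ℝ) < 2)
    exact this.congr fun x => rfl
  have h2 := (Real.tendsto_exp_atBot.comp h1).const_mul (Real.sqrt (2 * Real.pi))⁻¹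
  rw [mul_zero] at h2
  exact h2.congr fun x => rfl

lemma integral_univ_gpdf : ∫ x, gpdf x = 1 := by
  have h : ∫ x : ℝ, Real.exp (-(1/2) * x ^ 2) = Real.sqrt (Real.pi / (1/2)) :=
    integral_gaussian (1/2)
  have h2 : ∫ x, gpdf x = (Real.sqrt (2 * Real.pi))⁻¹ * ∫ x : ℝ, Real.exp (-(1/2) * x ^ 2) := by
    rw [← integral_const_mul]
    congr 1; funext x; rw [gpdf_def]; ring_nf
  rw [h2, h, show Real.pi / (1/2) = 2 * Real.pi by ring]
  exact inv_mul_cancel₀ (ne_of_gt (by have := sqrt_two_pi_bounds.1; linarith))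

lemma Phi_eq (t : ℝ) : Phi t = ∫ x in Set.Iic t, gpdf x := rfl

lemma integral_Iic_id_gpdf (t : ℝ) : ∫ x in Set.Iic t, x * gpdf x = -gpdf t := by
  have htend : Tendsto (fun y => -gpdf y) atBot (nhds 0) := by
    simpa using tendsto_gpdf_atBot.neg
  have h := integral_Iic_of_hasDerivAt_of_tendsto' (f := fun y => -gpdf y)
    (f' := fun x => x * gpdf x) (a := t) (m := 0)
    (fun x _ => by have h0 := (hasDerivAt_gpdf x).neg; simp only [neg_mul, neg_neg] at h0; exact h0)
    integrable_id_gpdf.integrableOn htend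
  simpa using h

lemma Phi_pos (t : ℝ) : 0 < Phi t := by
  have hii : IntervalIntegrable gpdf volume (t - 1) t :=
    integrable_gpdf.intervalIntegrable
  have hpos : (0:ℝ) < ∫ x in (t-1)..t, gpdf x :=
    intervalIntegral.intervalIntegral_pos_of_pos hii (fun x => gpdf_pos x) (by linarith)
  rw [intervalIntegral.integral_of_le (by linarith)] at hpos
  have hmono : (∫ x in Set.Ioc (t-1) t, gpdf x) ≤ ∫ x in Set.Iic t, gpdf x := by
    apply setIntegral_mono_set integrable_gpdf.integrableOn
    · filter_upwards with x using (gpdf_pos x).le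
    · filter_upwards with x hx using hx.2
  rw [Phi_eq]; linarith

lemma Phi_add_Phi_neg (t : ℝ) : Phi t + Phi (-t) = 1 := by
  have h1 : Phi (-t) = ∫ x in Set.Ioi t, gpdf x := by
    rw [Phi_eq, ← neg_neg t, ← integral_comp_neg_Ioi]
    congr 1; funext x; rw [gpdf_def, gpdf_def]; ring_nf
  rw [Phi_eq, h1, intervalIntegral.integral_Iic_add_Ioi integrable_gpdf.integrableOn
    integrable_gpdf.integrableOn, integral_univ_gpdf]

lemma Phi_lt_one (t : ℝ) : Phi t < 1 := by
  have h1 := Phi_add_Phi_neg t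
  have h2 := Phi_pos (-t)
  linarith

lemma hasDerivAt_Phi (t : ℝ) : HasDerivAt Phi (gpdf t) t := by
  have key : ∀ x : ℝ, Phi x = Phi 0 + ∫ u in (0:ℝ)..x, gpdf u := by
    intro x
    rw [Phi_eq, Phi_eq, ← intervalIntegral.integral_Iic_sub_Iic
      integrable_gpdf.integrableOn integrable_gpdf.integrableOn]
    ring
  have hder : HasDerivAt (fun x => Phi 0 + ∫ u in (0:ℝ)..x, gpdf u) (gpdf t) t := by
    apply HasDerivAt.const_add
    exact intervalIntegral.integral_hasDerivAt_right
      integrable_gpdf.intervalIntegrable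
      (continuous_gpdf.stronglyMeasurableAtFilter _ _)
      continuous_gpdf.continuousAt
  exact hder.congr_of_eventuallyEq (Filter.Eventually.of_forall fun x => key x)

lemma Phi_strictMono : StrictMono Phi :=
  strictMono_of_deriv_pos (fun x => by rw [(hasDerivAt_Phi x).deriv]; exact gpdf_pos x)

lemma Phi_continuous : Continuous Phi :=
  continuous_iff_continuousAt.2 fun x => (hasDerivAt_Phi x).continuousAt

lemma key_nonneg (t : ℝ) : 0 ≤ t * Phi t + gpdf t := by
  have h1 : ∫ x in Set.Iic t, (t - x) * gpdf x = t * Phi t + gpdf t := by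
    have ha : IntegrableOn (fun x => t * gpdf x) (Set.Iic t) volume :=
      (integrable_gpdf.const_mul t).integrableOn
    have hb : IntegrableOn (fun x => x * gpdf x) (Set.Iic t) volume :=
      integrable_id_gpdf.integrableOn
    have h2 : ∫ x in Set.Iic t, (t - x) * gpdf x
        = (∫ x in Set.Iic t, t * gpdf x) - ∫ x in Set.Iic t, x * gpdf x := by
      rw [← integral_sub ha hb]; congr 1; funext x; ring
    rw [h2, integral_Iic_id_gpdf, MeasureTheory.integral_const_mul, ← Phi_eq]
    ring
  rw [← h1]
  apply setIntegral_nonneg measurableSet_Iic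
  intro x hx
  simp only [Set.mem_Iic] at hx
  exact mul_nonneg (by linarith) (gpdf_pos x).le

lemma Phi_le_of_neg {t : ℝ} (ht : t < 0) : Phi t ≤ gpdf t / (-t) := by
  have h1 : Phi t ≤ ∫ x in Set.Iic t, (x / t) * gpdf x := by
    rw [Phi_eq]
    apply setIntegral_mono_on integrable_gpdf.integrableOn
      ((integrable_id_gpdf.div_const t).congr ?_).integrableOn measurableSet_Iic
    · intro x hx
      simp only [Set.mem_Iic] at hx
      have hxt : 1 ≤ x / t := by
        rw [le_div_iff_of_neg ht]; linarith
      nlinarith [gpdf_pos x]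
    · filter_upwards with x; ring
  have h2 : ∫ x in Set.Iic t, (x / t) * gpdf x = gpdf t / (-t) := by
    have h3 : ∫ x in Set.Iic t, (x / t) * gpdf x
        = (1/t) * ∫ x in Set.Iic t, x * gpdf x := by
      rw [← MeasureTheory.integral_const_mul]; congr 1; funext x; ring
    rw [h3, integral_Iic_id_gpdf]; field_simp
  linarith

lemma inv_sqrt_two_pi_le : (Real.sqrt (2 * Real.pi))⁻¹ ≤ 1/2 := by
  rw [← one_div]
  exact one_div_le_one_div_of_le (by norm_num) sqrt_two_pi_bounds.1

lemma inv_sqrt_two_pi_ge : (1:ℝ)/3 ≤ (Real.sqrt (2 * Real.pi))⁻¹ := by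
  rw [← one_div]
  exact one_div_le_one_div_of_le (by linarith [sqrt_two_pi_bounds.1]) sqrt_two_pi_bounds.2

lemma Phi_ge (t : ℝ) : -t * gpdf t / (t ^ 2 + 1) ≤ Phi t := by
  set u' : ℝ → ℝ := fun x => gpdf x * (x ^ 4 + 2 * x ^ 2 - 1) / (x ^ 2 + 1) ^ 2 with hu'
  have hden : ∀ x : ℝ, (x : ℝ) ^ 2 + 1 ≠ 0 := fun x => by positivity
  have hderiv : ∀ x : ℝ, HasDerivAt (fun y => -y * gpdf y / (y ^ 2 + 1)) (u' x) x := by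
    intro x
    have hn : HasDerivAt (fun y : ℝ => -y * gpdf y)
        (-1 * gpdf x + -x * (-x * gpdf x)) x :=
      ((hasDerivAt_id x).neg.mul (hasDerivAt_gpdf x))
    have hd : HasDerivAt (fun y : ℝ => y ^ 2 + 1) (2 * x) x := by
      simpa using (hasDerivAt_pow 2 x).add_const 1
    have h := hn.div hd (hden x)
    refine h.congr_deriv ?_
    rw [hu']
    field_simp
    ring
  have htend : Tendsto (fun y : ℝ => -y * gpdf y / (y ^ 2 + 1)) atBot (nhds 0) := by
    apply squeeze_zero_norm _ tendsto_gpdf_atBot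
    intro x
    have h1 : |(-x) * gpdf x / (x ^ 2 + 1)| = |x| * gpdf x / (x ^ 2 + 1) := by
      rw [abs_div, abs_mul, abs_neg, abs_of_pos (gpdf_pos x), abs_of_pos (show (0:ℝ) < x ^ 2 + 1 by positivity)]
    rw [Real.norm_eq_abs, h1, div_le_iff₀ (by positivity : (0:ℝ) < x ^ 2 + 1)]
    nlinarith [gpdf_pos x, sq_nonneg (|x| - 1), sq_abs x]
  have hint : IntegrableOn u' (Set.Iic t) volume := by
    have hcont : Continuous u' := by
      apply Continuous.div (continuous_gpdf.mul (by fun_prop)) (by fun_prop)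
      intro x; positivity
    apply (integrable_gpdf.mono hcont.aestronglyMeasurable ?_).integrableOn
    filter_upwards with x
    rw [Real.norm_eq_abs, Real.norm_eq_abs, hu']
    simp only
    rw [abs_div, abs_mul,
      abs_of_pos (gpdf_pos x), abs_of_pos (show (0:ℝ) < (x ^ 2 + 1) ^ 2 by positivity),
      div_le_iff₀ (show (0:ℝ) < (x ^ 2 + 1) ^ 2 by positivity)]
    have habs : |x ^ 4 + 2 * x ^ 2 - 1| ≤ (x ^ 2 + 1) ^ 2 := by
      rw [abs_le]; constructor <;> nlinarith [sq_nonneg x, sq_nonneg (x ^ 2)]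
    nlinarith [gpdf_pos x, abs_nonneg (x ^ 4 + 2 * x ^ 2 - 1)]
  have heq : ∫ x in Set.Iic t, u' x = -t * gpdf t / (t ^ 2 + 1) := by
    have h := integral_Iic_of_hasDerivAt_of_tendsto'
      (f := fun y => -y * gpdf y / (y ^ 2 + 1)) (f' := u') (a := t) (m := 0)
      (fun x _ => hderiv x) hint htend
    simpa using h
  rw [← heq, Phi_eq]
  apply setIntegral_mono_on hint integrable_gpdf.integrableOn measurableSet_Iic
  intro x _
  rw [hu']
  simp only
  rw [div_le_iff₀ (show (0:ℝ) < (x ^ 2 + 1) ^ 2 by positivity)]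
  nlinarith [gpdf_pos x, sq_nonneg x, sq_nonneg (x ^ 2),
    mul_pos (gpdf_pos x) (show (0:ℝ) < x ^ 2 + 1 by positivity)]

lemma Phi_ge_Ioc {b : ℝ} (hb : b ≤ 0) : gpdf (b - 1) ≤ Phi b := by
  have h1 : gpdf (b - 1) ≤ ∫ x in Set.Ioc (b - 1) b, gpdf x := by
    have hconst : ∫ _x in Set.Ioc (b - 1) b, gpdf (b - 1) = gpdf (b - 1) := by
      rw [setIntegral_const, Real.volume_real_Ioc, show b - (b - 1) = 1 by ring]
      simp
    rw [← hconst]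
    apply setIntegral_mono_on
      (integrableOn_const (by rw [Real.volume_Ioc]; exact ENNReal.ofReal_ne_top))
      integrable_gpdf.integrableOn measurableSet_Ioc
    intro x hx
    obtain ⟨hx1, hx2⟩ := hx
    rw [gpdf_def, gpdf_def]
    apply mul_le_mul_of_nonneg_left _ (by positivity)
    apply Real.exp_le_exp.2
    nlinarith
  have h2 : (∫ x in Set.Ioc (b - 1) b, gpdf x) ≤ Phi b := by
    rw [Phi_eq]
    apply setIntegral_mono_set integrable_gpdf.integrableOn
    · filter_upwards with x using (gpdf_pos x).le
    · filter_upwards with x hx using hx.2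
  linarith

lemma Phi_zero : Phi 0 = 1/2 := by
  have := Phi_add_Phi_neg 0
  rw [neg_zero] at this
  linarith

lemma exists_Phi_eq {s : ℝ} (hs : s ∈ Set.Ioo (0:ℝ) 1) : ∃ t, Phi t = s := by
  obtain ⟨hs0, hs1⟩ := hs
  have hs1' : 0 < 1 - s := by linarith
  have hsne : s ≠ 0 := ne_of_gt hs0
  have hsne' : 1 - s ≠ 0 := ne_of_gt hs1'
  set a : ℝ := -(2/s) with ha
  set b : ℝ := 2/(1-s) with hb
  have ha0 : a < 0 := by rw [ha]; have : (0:ℝ) < 2/s := by positivity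
                         linarith
  have hb0 : 0 < b := by rw [hb]; positivity
  have hPa : Phi a ≤ s/4 := by
    have h1 : Phi a ≤ gpdf a / (-a) := Phi_le_of_neg ha0
    have h2 : gpdf a / (-a) ≤ (1/2) / (2/s) := by
      apply div_le_div₀ (by norm_num) (gpdf_le_half a) (by positivity)
      rw [ha, neg_neg]
    calc Phi a ≤ (1/2)/(2/s) := le_trans h1 h2
      _ = s/4 := by rw [div_div_eq_mul_div]; ring
  have hPb : s < Phi b := by
    have h1 : Phi (-b) ≤ gpdf (-b) / b := by
      have h := Phi_le_of_neg (show -b < 0 by linarith)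
      rwa [neg_neg] at h
    have h2 : gpdf (-b) / b ≤ (1/2)/(2/(1-s)) := by
      apply div_le_div₀ (by norm_num) (gpdf_le_half _) (by positivity)
      rw [hb]
    have h3 : (1/2)/(2/(1-s)) = (1-s)/4 := by rw [div_div_eq_mul_div]; ring
    have h4 := Phi_add_Phi_neg b
    linarith
  have hab : a ≤ b := by linarith
  have hmem : s ∈ Set.Icc (Phi a) (Phi b) := ⟨by linarith, hPb.le⟩
  obtain ⟨t, _, ht⟩ := intermediate_value_Icc hab Phi_continuous.continuousOn hmem
  exact ⟨t, ht⟩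

lemma Phi_Psi {s : ℝ} (hs : s ∈ Set.Ioo (0:ℝ) 1) : Phi (Psi s) = s :=
  Function.invFun_eq (exists_Phi_eq hs)

lemma monoG : Monotone (fun t => Phi t / gpdf t) := by
  have hd : ∀ x : ℝ, HasDerivAt (fun t => Phi t / gpdf t)
      ((gpdf x * gpdf x - Phi x * (-x * gpdf x)) / (gpdf x) ^ 2) x :=
    fun x => (hasDerivAt_Phi x).div (hasDerivAt_gpdf x) (gpdf_pos x).ne'
  apply monotone_of_deriv_nonneg (fun x => (hd x).differentiableAt)
  intro x
  rw [(hd x).deriv]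
  apply div_nonneg _ (sq_nonneg _)
  nlinarith [mul_nonneg (key_nonneg x) (gpdf_pos x).le]

lemma main_bound (t : ℝ) : gpdf t ≤ 100 * Phi t * Real.sqrt |Real.log (Phi t)| := by
  have hΦpos := Phi_pos t
  have hΦlt := Phi_lt_one t
  have habs : |Real.log (Phi t)| = -Real.log (Phi t) :=
    abs_of_neg (Real.log_neg hΦpos hΦlt)
  rcases le_or_gt t (-1) with hcase | hcase
  · -- t ≤ -1
    have hub : Phi t ≤ Real.exp (-t ^ 2 / 2) := by
      have h1 : Phi t ≤ gpdf t / (-t) := Phi_le_of_neg (by linarith)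
      have h2 : gpdf t / (-t) ≤ gpdf t := by
        rw [div_le_iff₀ (by linarith : (0:ℝ) < -t)]
        nlinarith [gpdf_pos t]
      have h3 : gpdf t ≤ Real.exp (-t ^ 2 / 2) := by
        rw [gpdf_def]
        nlinarith [Real.exp_pos (-t ^ 2 / 2), inv_sqrt_two_pi_le]
      linarith
    have hlog : t ^ 2 / 2 ≤ -Real.log (Phi t) := by
      have h := (Real.log_le_log_iff hΦpos (Real.exp_pos _)).2 hub
      rw [Real.log_exp] at h
      linarith
    have hsq : (-t) / 2 ≤ Real.sqrt |Real.log (Phi t)| := by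
      rw [habs]
      exact (Real.le_sqrt (by linarith) (by nlinarith)).2 (by nlinarith)
    have h5 : -t * gpdf t ≤ Phi t * (t ^ 2 + 1) := by
      have h := Phi_ge t
      rwa [div_le_iff₀ (by positivity : (0:ℝ) < t ^ 2 + 1)] at h
    have h6 : gpdf t ≤ 2 * (-t) * Phi t := by
      have hmt : (0:ℝ) < -t := by linarith
      rw [← mul_le_mul_iff_right₀ hmt]
      calc -t * gpdf t ≤ Phi t * (t ^ 2 + 1) := h5
        _ ≤ -t * (2 * -t * Phi t) := by
            nlinarith [mul_nonneg (mul_nonneg (show (0:ℝ) ≤ -t - 1 by linarith)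
              (show (0:ℝ) ≤ -t + 1 by linarith)) hΦpos.le]
    nlinarith [mul_le_mul_of_nonneg_left hsq (show (0:ℝ) ≤ 100 * Phi t by positivity),
      mul_nonneg (show (0:ℝ) ≤ -t by linarith) hΦpos.le]
  rcases le_or_gt t 0 with hcase2 | hcase2
  · -- -1 < t ≤ 0
    have hexp2 : Real.exp 2 ≤ 8 := by
      have h := Real.exp_one_lt_d9
      have h2 : Real.exp 2 = Real.exp 1 * Real.exp 1 := by
        rw [← Real.exp_add]; norm_num
      nlinarith [Real.exp_pos 1]
    have hg2 : (1:ℝ)/24 ≤ gpdf (-2) := by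
      rw [gpdf_def]
      have h2 : (1:ℝ)/8 ≤ Real.exp (-(-2:ℝ) ^ 2 / 2) := by
        rw [show (-(-2:ℝ) ^ 2 / 2) = -2 by norm_num, Real.exp_neg, ← one_div]
        exact one_div_le_one_div_of_le (Real.exp_pos 2) hexp2
      nlinarith [Real.exp_pos (-(-2:ℝ) ^ 2 / 2), inv_sqrt_two_pi_ge,
        mul_le_mul inv_sqrt_two_pi_ge h2 (by norm_num) (by positivity)]
    have hΦlb : (1:ℝ)/24 ≤ Phi t := by
      have h1 : gpdf (-2) ≤ Phi (-1) := by
        have h := Phi_ge_Ioc (b := -1) (by norm_num)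
        rwa [show (-1:ℝ) - 1 = -2 by norm_num] at h
      have h2 : Phi (-1) ≤ Phi t := Phi_strictMono.monotone (by linarith)
      linarith
    have hΦub : Phi t ≤ 1/2 := by
      have h := Phi_strictMono.monotone hcase2
      rwa [Phi_zero] at h
    have hlog : (1:ℝ)/2 ≤ |Real.log (Phi t)| := by
      rw [habs]
      have h1 : Real.log (Phi t) ≤ Real.log (1/2) :=
        (Real.log_le_log_iff hΦpos (by norm_num)).2 hΦub
      rw [show (1:ℝ)/2 = 2⁻¹ by norm_num, Real.log_inv] at h1
      linarith [Real.log_two_gt_d9]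
    have hsq : (1:ℝ)/2 ≤ Real.sqrt |Real.log (Phi t)| :=
      (Real.le_sqrt (by norm_num) (abs_nonneg _)).2 (by nlinarith)
    nlinarith [gpdf_le_half t, mul_le_mul hΦlb hsq (by norm_num) hΦpos.le]
  · -- 0 < t
    have hΦhalf : (1:ℝ)/2 ≤ Phi t := by
      have h := Phi_strictMono.monotone hcase2.le
      rwa [Phi_zero] at h
    have hexp1 : Real.exp 1 ≤ 3 := by linarith [Real.exp_one_lt_d9]
    have htail : Real.exp (-t ^ 2) / 9 ≤ Phi (-t) := by
      have h1 : gpdf (-t - 1) ≤ Phi (-t) := Phi_ge_Ioc (by linarith)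
      have h2 : Real.exp (-t ^ 2) / 9 ≤ gpdf (-t - 1) := by
        rw [gpdf_def]
        have e1 : Real.exp (-(t ^ 2 + 1)) ≤ Real.exp (-(-t - 1) ^ 2 / 2) :=
          Real.exp_le_exp.2 (by nlinarith [sq_nonneg (t - 1)])
        have e2 : Real.exp (-(t ^ 2 + 1)) = Real.exp (-t ^ 2) * Real.exp (-1) := by
          rw [← Real.exp_add]; ring_nf
        have e3 : (1:ℝ)/3 ≤ Real.exp (-1) := by
          rw [Real.exp_neg, ← one_div]
          exact one_div_le_one_div_of_le (Real.exp_pos 1) hexp1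
        have e4 : Real.exp (-t ^ 2) / 3 ≤ Real.exp (-(-t - 1) ^ 2 / 2) := by
          nlinarith [Real.exp_pos (-t ^ 2)]
        nlinarith [mul_le_mul inv_sqrt_two_pi_ge e4 (by positivity) (by positivity)]
      linarith
    have hL : Real.exp (-t ^ 2) / 9 ≤ -Real.log (Phi t) := by
      have h1 : Real.log (Phi t) ≤ Phi t - 1 := Real.log_le_sub_one_of_pos hΦpos
      have h2 := Phi_add_Phi_neg t
      linarith
    have hsq : Real.exp (-t ^ 2 / 2) / 3 ≤ Real.sqrt |Real.log (Phi t)| := by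
      rw [habs]
      apply (Real.le_sqrt (by positivity) (by linarith [Real.exp_pos (-t ^ 2)])).2
      have hsqr : (Real.exp (-t ^ 2 / 2) / 3) ^ 2 = Real.exp (-t ^ 2) / 9 := by
        rw [div_pow, sq, ← Real.exp_add]
        norm_num
      rw [hsqr]; exact hL
    have hgb : gpdf t ≤ Real.exp (-t ^ 2 / 2) / 2 := by
      rw [gpdf_def]
      nlinarith [Real.exp_pos (-t ^ 2 / 2), inv_sqrt_two_pi_le]
    nlinarith [mul_le_mul hΦhalf hsq (by positivity) hΦpos.le, Real.exp_pos (-t ^ 2 / 2)]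

theorem q_over_s_decreasing_and_upper :
    AntitoneOn (fun s => q2 s / s) (Set.Ioo (0 : ℝ) 1) ∧
    ∃ C > (0 : ℝ), ∀ s ∈ Set.Ioo (0 : ℝ) 1, q2 s ≤ C * s * Real.sqrt |Real.log s| := by
  constructor
  · intro s₁ h₁ s₂ h₂ h12
    have hp1 := Phi_Psi h₁
    have hp2 := Phi_Psi h₂
    have ht : Psi s₁ ≤ Psi s₂ := by
      by_contra hcon
      push_neg at hcon
      have h := Phi_strictMono hcon
      rw [hp1, hp2] at h
      linarith
    have hG := monoG ht
    have h1p := Phi_pos (Psi s₁)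
    have h2p := Phi_pos (Psi s₂)
    have g1 := gpdf_pos (Psi s₁)
    have g2 := gpdf_pos (Psi s₂)
    have key : gpdf (Psi s₂) / Phi (Psi s₂) ≤ gpdf (Psi s₁) / Phi (Psi s₁) := by
      rw [div_le_div_iff₀ h2p h1p]
      have h3 := (div_le_div_iff₀ g1 g2).1 hG
      linear_combination h3
    rw [hp1, hp2] at key
    exact key
  · refine ⟨100, by norm_num, fun s hs => ?_⟩
    have hp := Phi_Psi hs
    have h := main_bound (Psi s)
    rw [hp] at h
    exact h
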